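/- Let δ ∈ (0,1], π ∈ (0,1), ρ ∈ (0,1), and A, B > 0. Viewing ΔEU(γ) := ρ(1−γ)π[(1−πδ)A + B] − ρ{[(γ−2)δπ + (1+δ)β − γ]A − γB} − [(1−γ)π + γ]B as a function of γ ∈ [0,1], its derivative equals (1−π){ρ(1−δπ)A − (1−ρ)B}, and this derivative is strictly positive if and only if ρ > ρ_γ, where ρ_γ := B / (B + (1−δπ)A) ∈ (0,1). -/

import Mathlib

/-- Derivative of the benchmark welfare difference in γ, and the threshold ρ_γ. -/
theorem stmt17 (delta p rho beta A B gamma D rhogamma : ℝ)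
    (hdelta : delta ∈ Set.Ioc (0:ℝ) 1) (hp : p ∈ Set.Ioo (0:ℝ) 1)
    (hrho : rho ∈ Set.Ioo (0:ℝ) 1) (hA : 0 < A) (hB : 0 < B)
    (hgamma : gamma ∈ Set.Icc (0:ℝ) 1)
    (hD : D = (1 - p) * (rho * (1 - delta * p) * A - (1 - rho) * B))
    (hrhogamma : rhogamma = B / (B + (1 - delta * p) * A)) :
    HasDerivAt (fun g : ℝ =>
        rho * (1 - g) * p * ((1 - p * delta) * A + B)
          - rho * (((g - 2) * delta * p + (1 + delta) * beta - g) * A - g * B)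
          - ((1 - g) * p + g) * B) D gamma ∧
    (0 < D ↔ rho > rhogamma) ∧
    rhogamma ∈ Set.Ioo (0:ℝ) 1 := by
  obtain ⟨hd0, hd1⟩ := hdelta
  obtain ⟨hp0, hp1⟩ := hp
  obtain ⟨hr0, hr1⟩ := hrho
  have hdp : delta * p < 1 := by nlinarith
  have hdenom : 0 < B + (1 - delta * p) * A := by nlinarith
  refine ⟨?_, ?_, ?_⟩
  · have h1 : HasDerivAt (fun g : ℝ => D * g +
        (rho * p * ((1 - p * delta) * A + B)
          - rho * ((-2 * delta * p + (1 + delta) * beta) * A) - p * B)) D gamma :=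
      by simpa using ((hasDerivAt_id gamma).const_mul D).add_const (rho * p * ((1 - p * delta) * A + B)
          - rho * ((-2 * delta * p + (1 + delta) * beta) * A) - p * B)
    have heq : (fun g : ℝ =>
        rho * (1 - g) * p * ((1 - p * delta) * A + B)
          - rho * (((g - 2) * delta * p + (1 + delta) * beta - g) * A - g * B)
          - ((1 - g) * p + g) * B) = (fun g : ℝ => D * g +
        (rho * p * ((1 - p * delta) * A + B)
          - rho * ((-2 * delta * p + (1 + delta) * beta) * A) - p * B)) := by
      funext g; rw [hD]; ring
    rw [heq]; exact h1
  · rw [hD, hrhogamma, gt_iff_lt, div_lt_iff₀ hdenom]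
    constructor
    · intro h; nlinarith
    · intro h; nlinarith
  · rw [hrhogamma]
    constructor
    · positivity
    · rw [div_lt_one hdenom]; nlinarith
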